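/- Let n2 ≤ n1, q = n1 div n2, r = n1 mod n2, and suppose a cluster C2 of size n2 has f2 faulty replicas with n2 > 3·f2. Form the list S2 of length n1 by repeating the canonical list of C2 (q full copies followed by its first r elements). Then the number f(S2) of faulty entries in S2 satisfies n1 > 2·f(S2). -/
import Mathlib

lemma filter_flatten_replicate {α : Type*} (L : List α) (p : α → Bool) :
    ∀ q : ℕ, (((List.replicate q L).flatten).filter p).length = q * (L.filter p).length := by
  intro q
  induction q with
  | zero => simp
  | succ k ih => simp [List.replicate_succ, ih, Nat.succ_mul, Nat.add_comm]

/-- Let `L` be the canonical duplicate-free list of a cluster of size `n2` with `f2`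
faulty replicas (faulty set `F`), and `n2 > 3·f2`, `n2 ≤ n1`. Form `S2` of length `n1`
by repeating `L` (`n1/n2` full copies followed by the first `n1 % n2` elements).
Then the number of faulty entries `f(S2)` of `S2` satisfies `n1 > 2·f(S2)`. -/
theorem stmt_15 {α : Type*} [DecidableEq α] (L : List α) (F : Finset α)
    (n1 n2 f2 : ℕ) (hlen : L.length = n2) (hnd : L.Nodup)
    (hf : (L.filter (· ∈ F)).length = f2)
    (h12 : n2 ≤ n1) (hrob : n2 > 3 * f2) :
    n1 > 2 * (((List.flatten (List.replicate (n1 / n2) L) ++ L.take (n1 % n2)).filter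
        (· ∈ F)).length) := by
  set q := n1 / n2 with hq
  set r := n1 % n2 with hr
  set p : α → Bool := (· ∈ F)
  set t := ((L.take r).filter p).length with ht
  have hflt : ((List.flatten (List.replicate q L) ++ L.take r).filter p).length
      = q * f2 + t := by
    rw [List.filter_append, List.length_append, filter_flatten_replicate, hf]
  have htr : t ≤ r := le_trans (List.length_filter_le _ _) (by simp)
  have htf : t ≤ f2 := by
    rw [← hf]
    exact ((List.take_sublist r L).filter p).length_le
  have hn2pos : 0 < n2 := by omega
  have hq1 : 1 ≤ q := (Nat.one_le_div_iff hn2pos).mpr h12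
  have hn1 : n1 = q * n2 + r := by rw [hq, hr, Nat.mul_comm]; exact (Nat.div_add_mod n1 n2).symm
  have hmul : q * (3 * f2 + 1) ≤ q * n2 := Nat.mul_le_mul_left q (by omega)
  have hexp : q * (3 * f2 + 1) = 3 * (q * f2) + q := by ring
  have hff : f2 ≤ q * f2 := Nat.le_mul_of_pos_left f2 hq1
  rw [hflt]
  omega
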